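/- For every r ≥ 2 and all positive integers t₁ ≤ t₂, there exists a bipartite graph G with parts X and Y of sizes m = (r+1)t₁ and n = (r+1)t₂ respectively, with δ(X,Y) = (1 − 1/(r+1))n and δ(Y,X) = (1 − 1/(r+1))m, together with an r-coloring of its edges in which every monochromatic connected component has at most (m+n)/(r+1) vertices. -/

import Mathlib

open SimpleGraph

/-- The subgraph of `G` consisting of the edges of color `i`. -/
def colorSub {V : Type*} {r : ℕ} (G : SimpleGraph V) (c : Sym2 V → Fin r) (i : Fin r) :
    SimpleGraph V where
  Adj u v := G.Adj u v ∧ c s(u, v) = i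
  symm := by
    constructor
    intro u v h
    exact ⟨h.1.symm, by rw [Sym2.eq_swap]; exact h.2⟩
  loopless := by
    constructor
    intro u h
    exact G.irrefl h.1

/-- The degree of `v`, as the number of its neighbors. -/
noncomputable def nd {V : Type*} (G : SimpleGraph V) (v : V) : ℕ :=
  (G.neighborSet v).ncard

lemma card_divNat_eq (n t : ℕ) (k : Fin n) :
    (Finset.univ.filter fun y : Fin (n * t) => Fin.divNat y = k).card = t := by
  have himg : (Finset.univ.filter fun y : Fin (n * t) => Fin.divNat y = k)
      = Finset.image (fun b : Fin t => finProdFinEquiv (k, b)) Finset.univ := by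
    ext y
    simp only [Finset.mem_filter, Finset.mem_univ, true_and, Finset.mem_image]
    constructor
    · intro h
      refine ⟨Fin.modNat y, ?_⟩
      have h2 := finProdFinEquiv.apply_symm_apply y
      rw [finProdFinEquiv_symm_apply] at h2
      rw [← h]; exact h2
    · rintro ⟨b, rfl⟩
      have := finProdFinEquiv.symm_apply_apply (k, b)
      rw [finProdFinEquiv_symm_apply] at this
      exact congrArg Prod.fst this
  rw [himg, Finset.card_image_of_injective _
    (fun a b hab => by have := finProdFinEquiv.injective hab; simpa using this)]
  simp

lemma ncard_divNat_eq (n t : ℕ) (k : Fin n) :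
    {y : Fin (n * t) | Fin.divNat y = k}.ncard = t := by
  rw [Set.ncard_eq_toFinset_card', Set.toFinset_setOf]
  exact card_divNat_eq n t k

lemma ncard_divNat_ne (n t : ℕ) (k : Fin n) :
    {y : Fin (n * t) | Fin.divNat y ≠ k}.ncard = n * t - t := by
  rw [Set.ncard_eq_toFinset_card', Set.toFinset_setOf]
  have h := Finset.card_filter_add_card_filter_not
    (s := (Finset.univ : Finset (Fin (n * t)))) (p := fun y => Fin.divNat y = k)
  rw [card_divNat_eq, Finset.card_univ, Fintype.card_fin] at h
  simp only [ne_eq]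
  omega

theorem stmt4 (r t₁ t₂ : ℕ) (hr : 2 ≤ r) (ht₁ : 1 ≤ t₁) (ht : t₁ ≤ t₂) :
    ∃ (G : SimpleGraph (Fin ((r + 1) * t₁) ⊕ Fin ((r + 1) * t₂)))
      (c : Sym2 (Fin ((r + 1) * t₁) ⊕ Fin ((r + 1) * t₂)) → Fin r),
      G ≤ completeBipartiteGraph (Fin ((r + 1) * t₁)) (Fin ((r + 1) * t₂)) ∧
      (∀ x, (nd G (Sum.inl x) : ℝ) = (1 - 1 / ((r : ℝ) + 1)) * ((r + 1) * t₂)) ∧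
      (∀ y, (nd G (Sum.inr y) : ℝ) = (1 - 1 / ((r : ℝ) + 1)) * ((r + 1) * t₁)) ∧
      ∀ (i : Fin r) (C : (colorSub G c i).ConnectedComponent),
        (C.supp.ncard : ℝ) ≤ (((r : ℝ) + 1) * t₁ + ((r : ℝ) + 1) * t₂) / ((r : ℝ) + 1) := by
  set V := Fin ((r + 1) * t₁) ⊕ Fin ((r + 1) * t₂)
  have hrpos : 0 < r := by omega
  -- class function
  set f : V → Fin (r + 1) := Sum.elim Fin.divNat Fin.divNat with hf
  set G : SimpleGraph V :=
    { Adj := fun u v =>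
        (completeBipartiteGraph (Fin ((r + 1) * t₁)) (Fin ((r + 1) * t₂))).Adj u v ∧
          f u + f v ≠ Fin.last r
      symm := ⟨fun u v h => ⟨h.1.symm, fun heq => h.2 (by rw [add_comm (f u) (f v)]; exact heq)⟩⟩
      loopless := ⟨fun u h =>
        (completeBipartiteGraph (Fin ((r + 1) * t₁)) (Fin ((r + 1) * t₂))).irrefl h.1⟩ }
    with hG
  set c : Sym2 V → Fin r :=
    Sym2.lift ⟨fun u v => ⟨(f u + f v).val % r, Nat.mod_lt _ hrpos⟩,
      fun u v => Fin.ext (by show ((f u + f v : Fin (r+1)).val % r) = ((f v + f u : Fin (r+1)).val % r); rw [add_comm (f u) (f v)])⟩ with hc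
  refine ⟨G, c, fun u v h => h.1, ?_, ?_, ?_⟩
  · -- degrees on the left
    intro x
    have hns : G.neighborSet (Sum.inl x) =
        Sum.inr '' {y : Fin ((r + 1) * t₂) | Fin.divNat y ≠ Fin.last r - Fin.divNat x} := by
      ext w
      cases w with
      | inl x' => simp [neighborSet, hG]
      | inr y =>
        simp only [mem_neighborSet, hG, Set.mem_image, Set.mem_setOf_eq]
        constructor
        · rintro ⟨-, hadj⟩
          refine ⟨y, fun hEq => hadj ?_, rfl⟩
          simp only [hf, Sum.elim_inl, Sum.elim_inr]
          rw [hEq]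
          abel
        · rintro ⟨y', hy', hEq⟩
          obtain rfl : y' = y := Sum.inr_injective hEq
          refine ⟨by simp, fun hEq2 => hy' ?_⟩
          simp only [hf, Sum.elim_inl, Sum.elim_inr] at hEq2
          rw [← hEq2]
          abel
    have hcard : nd G (Sum.inl x) = (r + 1) * t₂ - t₂ := by
      rw [nd, hns, Set.ncard_image_of_injective _ Sum.inr_injective, ncard_divNat_ne]
    rw [hcard]
    have hle : t₂ ≤ (r + 1) * t₂ := Nat.le_mul_of_pos_left t₂ (by omega)
    rw [Nat.cast_sub hle]
    push_cast
    have : ((r : ℝ) + 1) ≠ 0 := by positivity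
    field_simp
  · -- degrees on the right
    intro y
    have hns : G.neighborSet (Sum.inr y) =
        Sum.inl '' {x : Fin ((r + 1) * t₁) | Fin.divNat x ≠ Fin.last r - Fin.divNat y} := by
      ext w
      cases w with
      | inr y' => simp [neighborSet, hG]
      | inl x =>
        simp only [mem_neighborSet, hG, Set.mem_image, Set.mem_setOf_eq]
        constructor
        · rintro ⟨-, hadj⟩
          refine ⟨x, fun hEq => hadj ?_, rfl⟩
          simp only [hf, Sum.elim_inl, Sum.elim_inr]
          rw [hEq]
          abel
        · rintro ⟨x', hx', hEq⟩
          obtain rfl : x' = x := Sum.inl_injective hEq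
          refine ⟨by simp, fun hEq2 => hx' ?_⟩
          simp only [hf, Sum.elim_inl, Sum.elim_inr] at hEq2
          rw [← hEq2]
          abel
    have hcard : nd G (Sum.inr y) = (r + 1) * t₁ - t₁ := by
      rw [nd, hns, Set.ncard_image_of_injective _ Sum.inl_injective, ncard_divNat_ne]
    rw [hcard]
    have hle : t₁ ≤ (r + 1) * t₁ := Nat.le_mul_of_pos_left t₁ (by omega)
    rw [Nat.cast_sub hle]
    push_cast
    field_simp
  · -- component sizes
    intro i C
    set h : V → Fin (r + 1) :=
      Sum.elim Fin.divNat (fun y => Fin.castSucc i - Fin.divNat y) with hh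
    -- adjacent vertices in color class i have the same h-value
    have key : ∀ x y, (colorSub G c i).Adj (Sum.inl x) (Sum.inr y) →
        Fin.divNat x + Fin.divNat y = Fin.castSucc i := by
      intro x y hadj
      obtain ⟨⟨-, hne⟩, hcol⟩ := hadj
      simp only [hf, Sum.elim_inl, Sum.elim_inr] at hne
      have hlt : (Fin.divNat x + Fin.divNat y).val < r := by
        have h1 : (Fin.divNat x + Fin.divNat y).val < r + 1 := (Fin.divNat x + Fin.divNat y).2
        have h2 : (Fin.divNat x + Fin.divNat y).val ≠ r := by
          intro hEq
          exact hne (Fin.ext (by simp [hEq]))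
        omega
      have hcval : (Fin.divNat x + Fin.divNat y).val % r = i.val := by
        have := congrArg Fin.val hcol
        simpa [hc, hf] using this
      rw [Nat.mod_eq_of_lt hlt] at hcval
      exact Fin.ext (by simp [hcval])
    have hstep : ∀ u v : V, (colorSub G c i).Adj u v → h u = h v := by
      intro u v hadj
      cases u with
      | inl x =>
        cases v with
        | inl x' => exact absurd hadj.1.1 (by simp [hG])
        | inr y =>
          have := key x y hadj
          simp only [hh, Sum.elim_inl, Sum.elim_inr]
          rw [← this]; abel
      | inr y =>
        cases v with
        | inr y' => exact absurd hadj.1.1 (by simp [hG])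
        | inl x =>
          have := key x y hadj.symm
          simp only [hh, Sum.elim_inl, Sum.elim_inr]
          rw [← this]; abel
    have hconst : ∀ u v : V, (colorSub G c i).Reachable u v → h u = h v := by
      intro u v hreach
      obtain ⟨w⟩ := hreach
      induction w with
      | nil => rfl
      | cons hadj p ih => exact (hstep _ _ hadj).trans ih
    -- supp is contained in a set of size t₁ + t₂
    have hbound : C.supp.ncard ≤ t₁ + t₂ := by
      induction C using SimpleGraph.ConnectedComponent.ind with
      | _ v₀ =>
        have hsub : ((colorSub G c i).connectedComponentMk v₀).supp ⊆ {w : V | h w = h v₀} := by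
          intro v hv
          rw [SimpleGraph.ConnectedComponent.mem_supp_iff] at hv
          exact hconst v v₀ (SimpleGraph.ConnectedComponent.eq.mp hv)
        have hset : {w : V | h w = h v₀} =
            Sum.inl '' {x : Fin ((r + 1) * t₁) | Fin.divNat x = h v₀} ∪
            Sum.inr '' {y : Fin ((r + 1) * t₂) | Fin.divNat y = Fin.castSucc i - h v₀} := by
          ext w
          cases w with
          | inl x =>
            simp only [Set.mem_setOf_eq, hh, Sum.elim_inl, Set.mem_union, Set.mem_image]
            constructor
            · intro h'; exact Or.inl ⟨x, h', rfl⟩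
            · rintro (⟨x', hx', hEq⟩ | ⟨y', hy', hEq⟩)
              · obtain rfl : x' = x := Sum.inl_injective hEq
                exact hx'
              · simp at hEq
          | inr y =>
            simp only [Set.mem_setOf_eq, hh, Sum.elim_inr, Set.mem_union, Set.mem_image]
            constructor
            · intro h'
              refine Or.inr ⟨y, ?_, rfl⟩
              rw [← h']
              exact (sub_sub_cancel _ _).symm
            · rintro (⟨x', hx', hEq⟩ | ⟨y', hy', hEq⟩)
              · simp at hEq
              · obtain rfl : y' = y := Sum.inr_injective hEq
                rw [hy']
                exact sub_sub_cancel _ _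
        have hdisj : Disjoint
            (Sum.inl '' {x : Fin ((r + 1) * t₁) | Fin.divNat x = h v₀})
            (Sum.inr '' {y : Fin ((r + 1) * t₂) | Fin.divNat y = Fin.castSucc i - h v₀}) := by
          rw [Set.disjoint_left]
          rintro w ⟨x', -, rfl⟩ ⟨y', -, hEq⟩
          simp at hEq
        calc ((colorSub G c i).connectedComponentMk v₀).supp.ncard
            ≤ {w : V | h w = h v₀}.ncard := Set.ncard_le_ncard hsub (Set.toFinite _)
          _ = t₁ + t₂ := by
              rw [hset, Set.ncard_union_eq hdisj (Set.toFinite _) (Set.toFinite _),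
                Set.ncard_image_of_injective _ Sum.inl_injective,
                Set.ncard_image_of_injective _ Sum.inr_injective,
                ncard_divNat_eq, ncard_divNat_eq]
    have hRHS : (((r : ℝ) + 1) * t₁ + ((r : ℝ) + 1) * t₂) / ((r : ℝ) + 1)
        = (t₁ : ℝ) + t₂ := by
      have : ((r : ℝ) + 1) ≠ 0 := by positivity
      field_simp
    rw [hRHS]
    exact_mod_cast hbound
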